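/- Let N be a nondeterministic finite automaton with no empty states (every state accepts some word) whose reverse N^R is deterministic. Then the subset-construction determinization N^D of N is a minimal DFA, i.e., all its reachable states have pairwise distinct right languages. -/

import Mathlib

private lemma evalFrom_mono' {α σ : Type*} (N : NFA α σ) (w : List α) :
    ∀ {S T : Set σ}, S ⊆ T → N.evalFrom S w ⊆ N.evalFrom T w := by
  induction w with
  | nil => intro S T h; simpa using h
  | cons a w ih =>
    intro S T h
    have : N.stepSet S a ⊆ N.stepSet T a := by
      intro x hx
      rw [NFA.mem_stepSet] at hx ⊢
      obtain ⟨t, ht, hx⟩ := hx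
      exact ⟨t, h ht, hx⟩
    simpa [NFA.evalFrom] using ih this

private lemma mem_evalFrom_decomp {α σ : Type*} (N : NFA α σ) (w : List α) :
    ∀ {S : Set σ} {x : σ}, x ∈ N.evalFrom S w → ∃ p ∈ S, x ∈ N.evalFrom {p} w := by
  induction w with
  | nil => intro S x hx; exact ⟨x, by simpa using hx, by simp⟩
  | cons a w ih =>
    intro S x hx
    simp only [NFA.evalFrom, List.foldl_cons] at hx
    obtain ⟨y, hy, hx⟩ := ih hx
    rw [NFA.mem_stepSet] at hy
    obtain ⟨p, hp, hy⟩ := hy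
    refine ⟨p, hp, ?_⟩
    have hsub : ({y} : Set σ) ⊆ N.stepSet {p} a := by
      intro z hz; rw [Set.mem_singleton_iff] at hz; subst hz
      rw [NFA.mem_stepSet]; exact ⟨p, rfl, hy⟩
    simp only [NFA.evalFrom, List.foldl_cons]
    exact evalFrom_mono' N w hsub hx

private lemma backward_unique {α σ : Type*} (N : NFA α σ)
    (hrevdet_step : ∀ (q : σ) (a : α) (p₁ p₂ : σ),
      q ∈ N.step p₁ a → q ∈ N.step p₂ a → p₁ = p₂) (w : List α) :
    ∀ (x q p : σ), x ∈ N.evalFrom {q} w → x ∈ N.evalFrom {p} w → q = p := by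
  induction w using List.reverseRecOn with
  | nil => intro x q p hq hp; simp only [NFA.evalFrom_nil, Set.mem_singleton_iff] at hq hp
           rw [← hq, ← hp]
  | append_singleton u a ih =>
    intro x q p hq hp
    rw [NFA.evalFrom_append, NFA.evalFrom_singleton, NFA.mem_stepSet] at hq hp
    obtain ⟨y, hy, hxy⟩ := hq
    obtain ⟨z, hz, hxz⟩ := hp
    have : y = z := hrevdet_step x a y z hxy hxz
    subst this
    exact ih y q p hy hz

theorem brzozowski_determinization {α σ : Type*} (N : NFA α σ)
    (hnonempty : ∀ q : σ, ∃ w : List α, (N.evalFrom {q} w ∩ N.accept).Nonempty)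
    (hrevdet_accept : ∃ f : σ, N.accept = {f})
    (hrevdet_step : ∀ (q : σ) (a : α) (p₁ p₂ : σ),
      q ∈ N.step p₁ a → q ∈ N.step p₂ a → p₁ = p₂) :
    ∀ S₁ S₂ : Set σ, (∃ w : List α, N.toDFA.eval w = S₁) → (∃ w : List α, N.toDFA.eval w = S₂) →
      (∀ w : List α, N.toDFA.evalFrom S₁ w ∈ N.toDFA.accept ↔
        N.toDFA.evalFrom S₂ w ∈ N.toDFA.accept) → S₁ = S₂ := by
  obtain ⟨f, hf⟩ := hrevdet_accept
  have key : ∀ S₁ S₂ : Set σ,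
      (∀ w : List α, N.toDFA.evalFrom S₁ w ∈ N.toDFA.accept →
        N.toDFA.evalFrom S₂ w ∈ N.toDFA.accept) → S₁ ⊆ S₂ := by
    intro S₁ S₂ h q hq
    obtain ⟨w, s, hs, hsa⟩ := hnonempty q
    have hsf : s = f := by rw [hf] at hsa; exact hsa
    subst hsf
    have hDFA1 : N.toDFA.evalFrom S₁ w ∈ N.toDFA.accept := by
      refine ⟨s, ?_, by rw [hf]; rfl⟩
      have : N.toDFA.evalFrom S₁ w = N.evalFrom S₁ w := rfl
      rw [this]
      exact evalFrom_mono' N w (by simpa using hq) hs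
    have hDFA2 := h w hDFA1
    obtain ⟨t, ht, hta⟩ := hDFA2
    have htf : t = s := by rw [hf] at hta; exact hta
    subst htf
    have ht' : t ∈ N.evalFrom S₂ w := ht
    obtain ⟨p, hp, hpt⟩ := mem_evalFrom_decomp N w ht'
    have : q = p := backward_unique N hrevdet_step w t q p hs hpt
    rw [this]; exact hp
  intro S₁ S₂ _ _ hlang
  exact Set.Subset.antisymm (key S₁ S₂ fun w => (hlang w).mp) (key S₂ S₁ fun w => (hlang w).mpr)
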